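/- There exist a problem, zonal message spaces, and a visibly fair mechanism over them (hence a partitioned priority mechanism) that is not strategy-proof. Concretely: in the problem with three officers I = {i_1, i_2, i_3} (in decreasing priority), three states S = {s_1, s_2, s_3} each of capacity 1, and every officer having the zonal message space with zones z_1 = {s_1, s_2} and z_2 = {s_3}, there exists a visibly fair mechanism ψ under which some officer with true strict preference s_1 ≻ s_2 ≻ s_3 obtains a strictly ≻-preferred state by reporting the within-zone order s_2 ≻ s_1 instead of the truthful within-zone order s_1 ≻ s_2. -/

import Mathlib

attribute [local instance] Classical.propDecidable

section Defs

variable {S T : Type*} {n : ℕ}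

/-- A message is an irreflexive and acyclic binary relation on states. -/
def IsMessage (r : S → S → Prop) : Prop :=
  (∀ s, ¬ r s s) ∧ (∀ s, ¬ Relation.TransGen r s s)

/-- A strict preference: asymmetric, transitive and total (complete) relation. -/
def IsStrictPref (p : S → S → Prop) : Prop :=
  (∀ s s', p s s' → ¬ p s' s) ∧
  (∀ s s' s'', p s s' → p s' s'' → p s s'') ∧
  (∀ s s', s ≠ s' → p s s' ∨ p s' s)

/-- The weak part of a strict preference. -/
def weakPref (p : S → S → Prop) (s s' : S) : Prop := p s s' ∨ s = s'

/-- A message `r` is truthful for a preference `p`. -/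
def Truthful (p r : S → S → Prop) : Prop := ∀ s s', r s s' → p s s'

/-- Two states are comparable under a message. -/
def Cmp (r : S → S → Prop) (s s' : S) : Prop := s = s' ∨ r s s' ∨ r s' s

/-- Feasibility of an allocation with respect to capacities. -/
def Feasible (q : S → ℕ) (a : Fin n → S) : Prop :=
  ∀ s, (Finset.univ.filter fun i => a i = s).card ≤ q s

/-- Visible unfairness of allocation `a` under message profile `m`
(officer `i` has higher priority than `j` iff `i < j`). -/
def VisiblyUnfair (q : S → ℕ) (m : Fin n → S → S → Prop) (a : Fin n → S) : Prop :=
  ∃ i : Fin n,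
    (∃ j : Fin n, a i ≠ a j ∧ i < j ∧ m i (a j) (a i)) ∨
    (∃ s : S, a i ≠ s ∧ (Finset.univ.filter fun j => a j = s).card < q s ∧ m i s (a i))

/-- `G(X, r)`: the set of `r`-maximal (undominated) elements of `X`. -/
def maxSet (r : S → S → Prop) (X : Set S) : Set S :=
  {s | s ∈ X ∧ ∀ s' ∈ X, ¬ r s' s}

/-- `S^k(a)`: states whose capacity is not exhausted by the officers ranked above `k`. -/
def remStates (q : S → ℕ) (a : Fin n → S) (k : Fin n) : Set S :=
  {s | (Finset.univ.filter fun j => j < k ∧ a j = s).card < q s}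

/-- A mechanism is visibly fair on message spaces `M`. -/
def VisiblyFair (q : S → ℕ) (M : Fin n → Set (S → S → Prop))
    (ψ : (Fin n → S → S → Prop) → Fin n → S) : Prop :=
  ∀ m, (∀ i, m i ∈ M i) → ¬ VisiblyUnfair q m (ψ m)

/-- Strategy-proofness. -/
def StrategyProof (M : Fin n → Set (S → S → Prop))
    (ψ : (Fin n → S → S → Prop) → Fin n → S) : Prop :=
  ∀ (i : Fin n) (p : S → S → Prop), IsStrictPref p →
    ∀ m, (∀ j, m j ∈ M j) → Truthful p (m i) →
      ∀ mh ∈ M i, weakPref p (ψ m i) (ψ (Function.update m i mh) i)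

/-- Expressiveness. -/
def Expressive (M : Fin n → Set (S → S → Prop))
    (ψ : (Fin n → S → S → Prop) → Fin n → S) : Prop :=
  ∀ (i : Fin n) (m : Fin n → S → S → Prop), (∀ j, m j ∈ M j) →
    ∀ mh ∈ M i, Cmp (m i) (ψ (Function.update m i mh) i) (ψ m i)

/-- State `s` is available to officer `i` under allocation `a`. -/
def AvailState (q : S → ℕ) (a : Fin n → S) (i : Fin n) (s : S) : Prop :=
  (Finset.univ.filter fun j => a j = s ∧ j < i).card < q s

/-- Availability. -/
def Availability (q : S → ℕ) (M : Fin n → Set (S → S → Prop))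
    (ψ : (Fin n → S → S → Prop) → Fin n → S) : Prop :=
  ∀ (i : Fin n) (m : Fin n → S → S → Prop), (∀ j, m j ∈ M j) →
    ∀ mh ∈ M i, AvailState q (ψ m) i (ψ (Function.update m i mh) i)

/-- Weak availability. -/
def WeakAvailability (q : S → ℕ) (M : Fin n → Set (S → S → Prop))
    (ψ : (Fin n → S → S → Prop) → Fin n → S) : Prop :=
  ∀ (i : Fin n) (p : S → S → Prop), IsStrictPref p →
    ∀ m, (∀ j, m j ∈ M j) → Truthful p (m i) →
      ∀ mh ∈ M i, weakPref p (ψ (Function.update m i mh) i) (ψ m i) →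
        AvailState q (ψ m) i (ψ (Function.update m i mh) i)

/-- Coherence. -/
def Coherent (M : Fin n → Set (S → S → Prop))
    (ψ : (Fin n → S → S → Prop) → Fin n → S) : Prop :=
  ∀ (i : Fin n) (m : Fin n → S → S → Prop), (∀ j, m j ∈ M j) →
    ∀ mh ∈ M i, ψ (Function.update m i mh) i ≠ ψ m i →
      ψ (Function.update m i mh) i ∉
        maxSet (m i) {ψ m i, ψ (Function.update m i mh) i}

/-- Two states lie in a common zone of `Z`. -/
def SameZone (Z : Set (Set S)) (s s' : S) : Prop := ∃ z ∈ Z, s ∈ z ∧ s' ∈ z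

/-- A zonal message space with zones `Z`. -/
def ZonalSpace (Z : Set (Set S)) (M : Set (S → S → Prop)) : Prop :=
  (∀ r ∈ M, ∀ s s', (SameZone Z s s' → Cmp r s s') ∧ (¬ SameZone Z s s' → ¬ Cmp r s s')) ∧
  (∀ R : S → S → Prop, IsStrictPref R →
    ∃ r ∈ M, ∀ z ∈ Z, ∀ s ∈ z, ∀ s' ∈ z, s ≠ s' → (R s s' ↔ r s s'))

/-- Visible efficiency of a feasible allocation `a` under message profile `m`. -/
def VisEff (q : S → ℕ) (m : Fin n → S → S → Prop) (a : Fin n → S) : Prop :=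
  ¬ ∃ a' : Fin n → S, a' ≠ a ∧ Feasible q a' ∧ ∀ i, a' i ≠ a i → m i (a' i) (a i)

/-- Pareto efficiency with respect to a strict preference profile. -/
def ParetoEff (q : S → ℕ) (p : Fin n → S → S → Prop) (a : Fin n → S) : Prop :=
  ¬ ∃ a' : Fin n → S, a' ≠ a ∧ Feasible q a' ∧ ∀ i, a' i ≠ a i → p i (a' i) (a i)

end Defs

/-- Zones `z₁ = {s₁, s₂}` and `z₂ = {s₃}` (states `s₁ = 0`, `s₂ = 1`, `s₃ = 2`). -/
def Zex9 : Set (Set (Fin 3)) := {{0, 1}, {2}}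

/-- The true preference `s₁ ≻ s₂ ≻ s₃`, i.e. numerically smaller states preferred. -/
def prefEx9 : Fin 3 → Fin 3 → Prop := fun s s' => s < s'


def r01ex : Fin 3 → Fin 3 → Prop := fun s s' => s = 0 ∧ s' = 1
def r10ex : Fin 3 → Fin 3 → Prop := fun s s' => s = 1 ∧ s' = 0
def Mex9 : Set (Fin 3 → Fin 3 → Prop) := {r01ex, r10ex}

noncomputable def ψex (m : Fin 3 → Fin 3 → Fin 3 → Prop) : Fin 3 → Fin 3 :=
  if m 0 1 0 then ![1,0,2] else if m 1 1 0 then ![2,1,0] else ![2,0,1]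

lemma memMex9 {r : Fin 3 → Fin 3 → Prop} (h : r ∈ Mex9) : r = r01ex ∨ r = r10ex := h

lemma acyc01 : ∀ s, ¬ Relation.TransGen r01ex s s := by
  intro s h
  have hlt : Relation.TransGen (fun a b : Fin 3 => a < b) s s :=
    Relation.TransGen.mono (by rintro x y ⟨rfl, rfl⟩; decide) _ _ h
  have ht : Transitive (fun a b : Fin 3 => a < b) := fun _ _ _ h1 h2 => lt_trans h1 h2
  rw [@Relation.transGen_eq_self _ (fun a b : Fin 3 => a < b) ⟨fun _ _ _ h1 h2 => ht h1 h2⟩] at hlt; exact lt_irrefl s hlt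

lemma acyc10 : ∀ s, ¬ Relation.TransGen r10ex s s := by
  intro s h
  have hlt : Relation.TransGen (fun a b : Fin 3 => b < a) s s :=
    Relation.TransGen.mono (by rintro x y ⟨rfl, rfl⟩; decide) _ _ h
  have ht : Transitive (fun a b : Fin 3 => b < a) := fun _ _ _ h1 h2 => lt_trans h2 h1
  rw [@Relation.transGen_eq_self _ (fun a b : Fin 3 => b < a) ⟨fun _ _ _ h1 h2 => ht h1 h2⟩] at hlt; exact lt_irrefl s hlt

lemma sameZone9 (s s' : Fin 3) :
    SameZone Zex9 s s' ↔ ((s = 0 ∨ s = 1) ∧ (s' = 0 ∨ s' = 1)) ∨ (s = 2 ∧ s' = 2) := by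
  constructor
  · rintro ⟨z, hz, hs, hs'⟩
    rcases hz with rfl | hz
    · left
      constructor
      · simpa using hs
      · simpa using hs'
    · rw [Set.mem_singleton_iff] at hz; subst hz
      right
      exact ⟨by simpa using hs, by simpa using hs'⟩
  · rintro (⟨hs, hs'⟩ | ⟨rfl, rfl⟩)
    · exact ⟨{0, 1}, Or.inl rfl, by rcases hs with rfl | rfl <;> simp,
        by rcases hs' with rfl | rfl <;> simp⟩
    · exact ⟨{2}, Or.inr rfl, rfl, rfl⟩

lemma zonal9 : ZonalSpace Zex9 Mex9 := by
  constructor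
  · intro r hr s s'
    rcases memMex9 hr with rfl | rfl <;>
      rw [sameZone9] <;>
      constructor <;>
      · revert s s'
        simp only [Cmp, r01ex, r10ex]
        decide
  · intro R hR
    obtain ⟨hasym, -, htot⟩ := hR
    by_cases h : R 0 1
    · refine ⟨r01ex, Or.inl rfl, ?_⟩
      rintro z (rfl | hz) s hs s' hs' hne
      · simp only [Set.mem_insert_iff, Set.mem_singleton_iff] at hs hs'
        rcases hs with rfl | rfl <;> rcases hs' with rfl | rfl <;> simp_all [r01ex]
      · rw [Set.mem_singleton_iff] at hz; subst hz
        rw [Set.mem_singleton_iff] at hs hs'; subst hs; subst hs'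
        exact absurd rfl hne
    · have h' : R 1 0 := (htot 0 1 (by decide)).resolve_left h
      refine ⟨r10ex, Or.inr rfl, ?_⟩
      rintro z (rfl | hz) s hs s' hs' hne
      · simp only [Set.mem_insert_iff, Set.mem_singleton_iff] at hs hs'
        rcases hs with rfl | rfl <;> rcases hs' with rfl | rfl <;> simp_all [r10ex]
      · rw [Set.mem_singleton_iff] at hz; subst hz
        rw [Set.mem_singleton_iff] at hs hs'; subst hs; subst hs'
        exact absurd rfl hne

lemma feasAux (a : Fin 3 → Fin 3) (hinj : Function.Injective a) :
    Feasible (fun _ => 1) a := by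
  intro s
  rw [Finset.card_le_one]
  intro i hi j hj
  simp only [Finset.mem_filter] at hi hj
  exact hinj (hi.2.trans hj.2.symm)

lemma fullAux (a : Fin 3 → Fin 3) (hsurj : Function.Surjective a) (s : Fin 3)
    {inst : DecidablePred fun j => a j = s} :
    ¬ (@Finset.filter _ _ inst Finset.univ).card < 1 := by
  obtain ⟨i, rfl⟩ := hsurj s
  have hmem : i ∈ @Finset.filter _ _ inst Finset.univ :=
    Finset.mem_filter.mpr ⟨Finset.mem_univ i, rfl⟩
  have := Finset.card_pos.mpr ⟨i, hmem⟩
  omega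

lemma ψex_bij (m : Fin 3 → Fin 3 → Fin 3 → Prop) : Function.Bijective (ψex m) := by
  unfold ψex
  split_ifs <;> decide

/-- there is a visibly fair mechanism on zonal message spaces (a
partitioned priority mechanism) that is not strategy-proof: some officer with true
preference `s₁ ≻ s₂ ≻ s₃` profits by reversing her within-zone report of `s₁, s₂`. -/
theorem stmt9 :
    ∃ (M : Fin 3 → Set (Fin 3 → Fin 3 → Prop))
      (ψ : (Fin 3 → Fin 3 → Fin 3 → Prop) → Fin 3 → Fin 3),
      (∀ i, (M i).Nonempty) ∧
      (∀ i, ∀ r ∈ M i, IsMessage r) ∧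
      (∀ i, ZonalSpace Zex9 (M i)) ∧
      (∀ m, (∀ j, m j ∈ M j) → Feasible (fun _ => 1) (ψ m)) ∧
      VisiblyFair (fun _ => 1) M ψ ∧
      ∃ (i : Fin 3) (m : Fin 3 → Fin 3 → Fin 3 → Prop) (mh : Fin 3 → Fin 3 → Prop),
        (∀ j, m j ∈ M j) ∧ mh ∈ M i ∧
        Truthful prefEx9 (m i) ∧
        m i 0 1 ∧ mh 1 0 ∧
        prefEx9 (ψ (Function.update m i mh) i) (ψ m i) := by
  refine ⟨fun _ => Mex9, ψex, fun _ => ⟨r01ex, Or.inl rfl⟩, ?_, fun _ => zonal9, ?_, ?_, ?_⟩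
  · rintro i r hr
    rcases memMex9 hr with rfl | rfl
    · exact ⟨fun s h => absurd (h.1.symm.trans h.2) (by decide), acyc01⟩
    · exact ⟨fun s h => absurd (h.1.symm.trans h.2) (by decide), acyc10⟩
  · intro m _
    exact feasAux _ (ψex_bij m).1
  · rintro m hM ⟨i, ⟨j, hne, hij, hm⟩ | ⟨s, hne, hcard, hm⟩⟩
    · rcases memMex9 (hM 0) with h0 | h0 <;> rcases memMex9 (hM 1) with h1 | h1 <;>
        rcases memMex9 (hM i) with hi | hi <;>
        fin_cases i <;> fin_cases j <;>
        simp_all [ψex, r01ex, r10ex]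
    · exact fullAux _ (ψex_bij m).2 s hcard
  · refine ⟨0, fun _ => r01ex, r10ex, fun _ => Or.inl rfl, Or.inr rfl, ?_, ⟨rfl, rfl⟩,
      ⟨rfl, rfl⟩, ?_⟩
    · rintro s s' ⟨rfl, rfl⟩; exact (by decide : (0:Fin 3) < 1)
    · simp only [ψex, Function.update_self]
      norm_num [r01ex, r10ex, prefEx9]
      simp [r01ex, r10ex]
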